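/- Let N ≥ 1, φ > 0, and c : ℕ → [0,1] with c(0) = 1 satisfying ∑_{n=0}^∞ φ^n ∏_{i=0}^n c(i) < ∞. Then the random walk on ℕ^N with transitions as in the PRP intra-patch dynamics (coordinate j moves up with probability φ·c(i_j)/((1+φ)N), down with probability 1/((1+φ)N), loop with the remaining probability) is positive recurrent. -/
import Mathlib


open scoped Classical

/-- Transition kernel on `ℕ^N` of the intra-patch walk of the PRP: coordinate `j`
increases by `1` with probability `φ·c(i_j)/((1+φ)N)`, decreases by `1` with probability
`1/((1+φ)N)` (if `i_j ≥ 1`), and the walk stays put with the remaining probability. -/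
noncomputable def prpKernel (N : ℕ) (phi : ℝ) (c : ℕ → ℝ) :
    (Fin N → ℕ) → (Fin N → ℕ) → ℝ := fun f g =>
  (∑ j : Fin N,
      ((if g = Function.update f j (f j + 1) then phi * c (f j) / ((1 + phi) * N) else 0) +
        (if 0 < f j ∧ g = Function.update f j (f j - 1) then 1 / ((1 + phi) * N) else 0))) +
    (if g = f then
      1 - ∑ j : Fin N, (phi * c (f j) / ((1 + phi) * N) +
        (if 0 < f j then 1 / ((1 + phi) * N) else 0))
    else 0)

set_option maxHeartbeats 1000000 in
/-- Product of a summable family over a pi type. -/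
lemma prp_hasSum_pi_prod {w : ℕ → ℝ} (hw0 : ∀ n, 0 ≤ w n) {Z : ℝ} (hZ : HasSum w Z) :
    ∀ N : ℕ, HasSum (fun f : Fin N → ℕ => ∏ j, w (f j)) (Z ^ N) := by
  intro N
  induction N with
  | zero =>
      have : HasSum (fun _ : (Fin 0 → ℕ) => (1 : ℝ)) 1 := by
        simpa using hasSum_fintype (fun _ : (Fin 0 → ℕ) => (1 : ℝ))
      simpa using this
  | succ N ih =>
      have hsummable :
          Summable (fun p : ℕ × (Fin N → ℕ) => w p.1 * ∏ j, w (p.2 j)) := by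
        exact Summable.mul_of_nonneg (f := w) (g := fun f : Fin N → ℕ => ∏ j, w (f j))
          hZ.summable ih.summable (fun n => hw0 n)
          (fun f => Finset.prod_nonneg fun j _ => hw0 _)
      have hmul : HasSum (fun p : ℕ × (Fin N → ℕ) => w p.1 * ∏ j, w (p.2 j))
          (Z * Z ^ N) := HasSum.mul (f := w) (g := fun f : Fin N → ℕ => ∏ j, w (f j))
            hZ ih hsummable
      have he := (Fin.consEquiv (fun _ : Fin (N + 1) => ℕ)).hasSum_iff
        (f := fun f : Fin (N + 1) → ℕ => ∏ j, w (f j)) (a := Z * Z ^ N)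
      have hcomp : ((fun f : Fin (N + 1) → ℕ => ∏ j, w (f j)) ∘
          (Fin.consEquiv (fun _ : Fin (N + 1) => ℕ)))
          = fun p : ℕ × (Fin N → ℕ) => w p.1 * ∏ j, w (p.2 j) := by
        funext p
        simp [Fin.consEquiv, Fin.prod_univ_succ]
      rw [hcomp] at he
      have := he.1 hmul
      simpa [pow_succ, mul_comm] using this
  
/-- Detailed balance, one-directional term. -/
lemma prp_db_term {N : ℕ} (phi : ℝ) (c : ℕ → ℝ) (w : ℕ → ℝ)
    (hwrec : ∀ n, w (n + 1) = phi * c n * w n)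
    (f g : Fin N → ℕ) (j : Fin N) :
    (∏ k, w (f k)) *
        (if g = Function.update f j (f j + 1) then phi * c (f j) / ((1 + phi) * N) else 0)
      = (∏ k, w (g k)) *
        (if 0 < g j ∧ f = Function.update g j (g j - 1) then 1 / ((1 + phi) * N) else 0) := by
  by_cases h : g = Function.update f j (f j + 1)
  · subst h
    have hcond : 0 < Function.update f j (f j + 1) j ∧
        f = Function.update (Function.update f j (f j + 1)) j
          (Function.update f j (f j + 1) j - 1) := by
      constructor
      · simp [Function.update_self]
      · simp [Function.update_self, Function.update_idem, Function.update_eq_self]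
    rw [if_pos rfl, if_pos hcond]
    have h1 : (∏ k, w (Function.update f j (f j + 1) k))
        = w (f j + 1) * ∏ k ∈ Finset.univ.erase j, w (f k) := by
      rw [← Finset.mul_prod_erase Finset.univ
        (fun k => w (Function.update f j (f j + 1) k)) (Finset.mem_univ j)]
      congr 1
      · simp
      · exact Finset.prod_congr rfl fun k hk => by
          rw [Function.update_of_ne (Finset.ne_of_mem_erase hk)]
    have h2 : (∏ k, w (f k)) = w (f j) * ∏ k ∈ Finset.univ.erase j, w (f k) :=
      (Finset.mul_prod_erase Finset.univ _ (Finset.mem_univ j)).symm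
    rw [h1, h2, hwrec]
    ring
  · rw [if_neg h, mul_zero]
    have hcond : ¬(0 < g j ∧ f = Function.update g j (g j - 1)) := by
      rintro ⟨hpos, rfl⟩
      apply h
      funext k
      by_cases hk : k = j
      · subst hk
        simp [Function.update_self, Function.update_idem, Nat.succ_pred_eq_of_pos hpos,
          Nat.sub_add_cancel hpos]
      · simp [Function.update_of_ne hk]
    rw [if_neg hcond, mul_zero]

/-- Detailed balance for the PRP kernel. -/
lemma prp_detailed_balance {N : ℕ} (phi : ℝ) (c : ℕ → ℝ) (w : ℕ → ℝ)
    (hwrec : ∀ n, w (n + 1) = phi * c n * w n) (f g : Fin N → ℕ) :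
    (∏ k, w (f k)) * prpKernel N phi c f g = (∏ k, w (g k)) * prpKernel N phi c g f := by
  unfold prpKernel
  rw [mul_add, mul_add, Finset.mul_sum, Finset.mul_sum]
  congr 1
  · refine Finset.sum_congr rfl fun j _ => ?_
    rw [mul_add, mul_add]
    rw [prp_db_term phi c w hwrec f g j]
    have := (prp_db_term phi c w hwrec g f j).symm
    rw [this]
    ring
  · by_cases h : g = f
    · subst h; simp
    · rw [if_neg h, if_neg fun hh => h hh.symm, mul_zero, mul_zero]

/-- The PRP kernel is a stochastic matrix: rows sum to one. -/
lemma prp_rowsum (N : ℕ) (phi : ℝ) (c : ℕ → ℝ) (f : Fin N → ℕ) :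
    HasSum (fun g => prpKernel N phi c f g) 1 := by
  unfold prpKernel
  have h1 : ∀ j : Fin N, HasSum
      (fun g : Fin N → ℕ =>
        (if g = Function.update f j (f j + 1) then phi * c (f j) / ((1 + phi) * N) else 0) +
          (if 0 < f j ∧ g = Function.update f j (f j - 1) then 1 / ((1 + phi) * N) else 0))
      (phi * c (f j) / ((1 + phi) * N) + (if 0 < f j then 1 / ((1 + phi) * N) else 0)) := by
    intro j
    refine HasSum.add (hasSum_ite_eq _ _) ?_
    by_cases h : 0 < f j
    · simpa [h] using hasSum_ite_eq (Function.update f j (f j - 1)) (1 / ((1 + phi) * N))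
    · simpa [h] using (hasSum_zero : HasSum (fun _ : Fin N → ℕ => (0 : ℝ)) 0)
  have hsumpart := hasSum_sum (s := Finset.univ) fun j _ => h1 j
  have hloop : HasSum
      (fun g : Fin N → ℕ =>
        if g = f then
          1 - ∑ j : Fin N, (phi * c (f j) / ((1 + phi) * N) +
            (if 0 < f j then 1 / ((1 + phi) * N) else 0))
        else 0)
      (1 - ∑ j : Fin N, (phi * c (f j) / ((1 + phi) * N) +
        (if 0 < f j then 1 / ((1 + phi) * N) else 0))) := hasSum_ite_eq _ _
  have := hsumpart.add hloop
  simpa using this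

/-- If `∑_{n=0}^∞ φ^n ∏_{i=0}^n c(i) < ∞`, the intra-patch walk of the PRP on `ℕ^N` is
positive recurrent: it admits a stationary probability distribution. -/
theorem stmt3 (N : ℕ) (hN : 1 ≤ N) (phi : ℝ) (hphi : 0 < phi) (c : ℕ → ℝ)
    (hrange : ∀ n, c n ∈ Set.Icc (0 : ℝ) 1) (h0 : c 0 = 1)
    (hsum : Summable (fun n : ℕ => phi ^ n * ∏ i ∈ Finset.range (n + 1), c i)) :
    ∃ pi : (Fin N → ℕ) → ℝ, (∀ f, 0 ≤ pi f) ∧ HasSum pi 1 ∧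
      ∀ g, (∑' f, pi f * prpKernel N phi c f g) = pi g := by
  set w : ℕ → ℝ := fun n => phi ^ n * ∏ i ∈ Finset.range n, c i with hw_def
  have hw0 : w 0 = 1 := by simp [hw_def]
  have hwrec : ∀ n, w (n + 1) = phi * c n * w n := by
    intro n
    simp only [hw_def, pow_succ, Finset.prod_range_succ]
    ring
  have hwnn : ∀ n, 0 ≤ w n := by
    intro n
    exact mul_nonneg (pow_nonneg hphi.le _)
      (Finset.prod_nonneg fun i _ => (hrange i).1)
  have hshift : (fun n => w (n + 1))
      = fun n => phi * (phi ^ n * ∏ i ∈ Finset.range (n + 1), c i) := by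
    funext n
    simp only [hw_def, pow_succ]
    ring
  have hsw : Summable w := by
    refine (summable_nat_add_iff 1).1 ?_
    rw [hshift]
    exact hsum.mul_left phi
  set Z : ℝ := ∑' n, w n with hZ_def
  have hZ : HasSum w Z := hsw.hasSum
  have hZ1 : (1 : ℝ) ≤ Z := by
    have := le_hasSum hZ 0 fun i _ => hwnn i
    rwa [hw0] at this
  have hZNpos : (0 : ℝ) < Z ^ N := pow_pos (lt_of_lt_of_le one_pos hZ1) N
  set ν : (Fin N → ℕ) → ℝ := fun f => ∏ j, w (f j) with hν_def
  have hνsum : HasSum ν (Z ^ N) := prp_hasSum_pi_prod hwnn hZ N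
  refine ⟨fun f => ν f / Z ^ N, ?_, ?_, ?_⟩
  · intro f
    exact div_nonneg (Finset.prod_nonneg fun j _ => hwnn _) hZNpos.le
  · have := hνsum.div_const (Z ^ N)
    rwa [div_self hZNpos.ne'] at this
  · intro g
    have hpoint : ∀ f, ν f / Z ^ N * prpKernel N phi c f g
        = ν g / Z ^ N * prpKernel N phi c g f := by
      intro f
      have := prp_detailed_balance phi c w hwrec f g
      simp only [hν_def]
      rw [div_mul_eq_mul_div, div_mul_eq_mul_div, this]
    calc (∑' f, ν f / Z ^ N * prpKernel N phi c f g)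
        = ∑' f, ν g / Z ^ N * prpKernel N phi c g f := by
          exact tsum_congr hpoint
      _ = ν g / Z ^ N * ∑' f, prpKernel N phi c g f := tsum_mul_left
      _ = ν g / Z ^ N := by rw [(prp_rowsum N phi c g).tsum_eq, mul_one]
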